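/- Suppose u : [-1,1] → ℝ is C², u ≥ 0, and satisfies ε² u'' ≥ 4 M² u on (-1,1) for constants ε, M > 0, with u(-1) = u(1) = U ≥ 0. Then u(x) ≤ U (e^{-M(1+x)/ε} + e^{-M(1-x)/ε}) for all x ∈ [-1,1]. -/

import Mathlib

open Set Real Filter

private lemma expAux (a b x : ℝ) :
    HasDerivAt (fun x => Real.exp (a * x + b)) (a * Real.exp (a * x + b)) x := by
  have h : HasDerivAt (fun x => a * x + b) a x := by
    simpa using ((hasDerivAt_id x).const_mul a).add_const b
  exact ((Real.hasDerivAt_exp (a * x + b)).comp x h).congr_deriv (mul_comm _ _)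

/-- Comparison estimate: if ε² u'' ≥ 4M² u, u ≥ 0, u(±1) = U, then
u(x) ≤ U (e^{-M(1+x)/ε} + e^{-M(1-x)/ε}). -/
theorem stmt_13 (ε M U : ℝ) (hε : 0 < ε) (hM : 0 < M) (hU : 0 ≤ U)
    (u u' u'' : ℝ → ℝ)
    (hd1 : ∀ x ∈ Set.Icc (-1 : ℝ) 1, HasDerivWithinAt u (u' x) (Set.Icc (-1 : ℝ) 1) x)
    (hd2 : ∀ x ∈ Set.Icc (-1 : ℝ) 1, HasDerivWithinAt u' (u'' x) (Set.Icc (-1 : ℝ) 1) x)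
    (hc2 : ContinuousOn u'' (Set.Icc (-1 : ℝ) 1))
    (hpos : ∀ x ∈ Set.Icc (-1 : ℝ) 1, 0 ≤ u x)
    (hineq : ∀ x ∈ Set.Ioo (-1 : ℝ) 1, 4 * M ^ 2 * u x ≤ ε ^ 2 * u'' x)
    (hb1 : u (-1) = U) (hb2 : u 1 = U) :
    ∀ x ∈ Set.Icc (-1 : ℝ) 1,
      u x ≤ U * (Real.exp (-M * (1 + x) / ε) + Real.exp (-M * (1 - x) / ε)) := by
  have haP : 0 < M / ε := div_pos hM hε
  set a : ℝ := M / ε with ha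
  have haε : a * ε = M := div_mul_cancel₀ M hε.ne'
  set G : ℝ → ℝ := fun x => U * (Real.exp (-a * x + -a) + Real.exp (a * x + -a)) with hGdef
  set G' : ℝ → ℝ := fun x =>
    U * (-a * Real.exp (-a * x + -a) + a * Real.exp (a * x + -a)) with hG'def
  have hGd : ∀ x, HasDerivAt G (G' x) x := by
    intro x
    exact ((expAux (-a) (-a) x).add (expAux a (-a) x)).const_mul U
  have hG'd : ∀ x, HasDerivAt G' (a ^ 2 * G x) x := by
    intro x
    have h1 :
        HasDerivAt (fun x => -a * Real.exp (-a * x + -a) + a * Real.exp (a * x + -a))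
          (-a * (-a * Real.exp (-a * x + -a)) + a * (a * Real.exp (a * x + -a))) x :=
      ((expAux (-a) (-a) x).const_mul (-a)).add ((expAux a (-a) x).const_mul a)
    have := h1.const_mul U
    convert this using 1
    show a ^ 2 * (U * (Real.exp (-a * x + -a) + Real.exp (a * x + -a))) = _
    ring
    all_goals rfl
  have hGc : Continuous G := by
    simp only [hGdef]
    fun_prop
  have hG'c : Continuous G' := by
    simp only [hG'def]
    fun_prop
  have hGpos : ∀ x, 0 ≤ G x := by
    intro x
    simp only [hGdef]
    positivity
  have hu_cont : ContinuousOn u (Icc (-1 : ℝ) 1) := fun x hx =>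
    (hd1 x hx).continuousWithinAt
  have hu'_cont : ContinuousOn u' (Icc (-1 : ℝ) 1) := fun x hx =>
    (hd2 x hx).continuousWithinAt
  have main : ∀ x ∈ Icc (-1 : ℝ) 1, 0 ≤ G x - u x := by
    have hw_cont : ContinuousOn (fun x => G x - u x) (Icc (-1 : ℝ) 1) :=
      hGc.continuousOn.sub hu_cont
    obtain ⟨x0, hx0, hmin⟩ := isCompact_Icc.exists_isMinOn
      (⟨-1, by simp⟩ : (Icc (-1 : ℝ) 1).Nonempty) hw_cont
    suffices h0 : 0 ≤ G x0 - u x0 by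
      intro y hy
      have := hmin hy
      simp only [Set.mem_setOf_eq] at this
      linarith
    by_contra hcon
    push_neg at hcon
    -- boundary values are nonnegative
    have hbm : 0 ≤ G (-1) - u (-1) := by
      have e1 : -a * (-1 : ℝ) + -a = 0 := by ring
      simp only [hGdef, hb1, e1, Real.exp_zero]
      nlinarith [Real.exp_pos (a * (-1 : ℝ) + -a)]
    have hbp : 0 ≤ G (1 : ℝ) - u 1 := by
      have e1 : a * (1 : ℝ) + -a = 0 := by ring
      simp only [hGdef, hb2, e1, Real.exp_zero]
      nlinarith [Real.exp_pos (-a * (1 : ℝ) + -a)]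
    have hx0o : x0 ∈ Ioo (-1 : ℝ) 1 := by
      rcases hx0 with ⟨hl, hr⟩
      constructor
      · rcases lt_or_eq_of_le hl with h | h
        · exact h
        · exact absurd hcon (by rw [h] at hbm; linarith)
      · rcases lt_or_eq_of_le hr with h | h
        · exact h
        · exact absurd hcon (by rw [← h] at hbp; linarith)
    have hmem : Icc (-1 : ℝ) 1 ∈ nhds x0 := Icc_mem_nhds hx0o.1 hx0o.2
    have hu1 : HasDerivAt u (u' x0) x0 := (hd1 x0 hx0).hasDerivAt hmem
    have hw1 : HasDerivAt (fun x => G x - u x) (G' x0 - u' x0) x0 := (hGd x0).sub hu1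
    have hloc : IsLocalMin (fun x => G x - u x) x0 := hmin.isLocalMin hmem
    have hw'0 : G' x0 - u' x0 = 0 := hloc.hasDerivAt_eq_zero hw1
    -- second derivative of w is negative at x0
    have hW2 : a ^ 2 * G x0 - u'' x0 < 0 := by
      have hiq := hineq x0 hx0o
      have hG0 := hGpos x0
      have hMsq : M ^ 2 = a ^ 2 * ε ^ 2 := by rw [← haε]; ring
      rw [hMsq] at hiq
      nlinarith [mul_pos (mul_pos haP haP) (mul_pos hε hε), sq_nonneg a, sq_nonneg ε]
    -- continuity gives a small interval to the right of x0 where w'' < 0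
    have hcW : ContinuousAt (fun x => a ^ 2 * G x - u'' x) x0 :=
      ContinuousWithinAt.continuousAt
        (((continuous_const.mul hGc).continuousOn.sub hc2) x0 hx0) hmem
    have hnb : {x | a ^ 2 * G x - u'' x < 0} ∩ Ioo (-1 : ℝ) 1 ∈ nhds x0 :=
      inter_mem (hcW (Iio_mem_nhds hW2)) (Ioo_mem_nhds hx0o.1 hx0o.2)
    obtain ⟨r, hr, hball⟩ := Metric.mem_nhds_iff.1 hnb
    set b : ℝ := x0 + r / 2 with hbdef
    have hx0b : x0 < b := by simp only [hbdef]; linarith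
    have hsub : Icc x0 b ⊆ Metric.ball x0 r := by
      intro x hx
      rw [Metric.mem_ball, Real.dist_eq, abs_lt]
      rcases hx with ⟨h1, h2⟩
      constructor <;> simp only [hbdef] at h2 ⊢ <;> linarith
    have hIoo : ∀ x ∈ Icc x0 b, x ∈ Ioo (-1 : ℝ) 1 := fun x hx => (hball (hsub hx)).2
    have hW2neg : ∀ x ∈ Icc x0 b, a ^ 2 * G x - u'' x < 0 := fun x hx => (hball (hsub hx)).1
    have hIcc : Icc x0 b ⊆ Icc (-1 : ℝ) 1 := fun x hx => Ioo_subset_Icc_self (hIoo x hx)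
    -- w' is strictly decreasing on [x0, b]
    have hanti' : StrictAntiOn (fun x => G' x - u' x) (Icc x0 b) := by
      apply strictAntiOn_of_deriv_neg (convex_Icc _ _)
        (hG'c.continuousOn.sub (hu'_cont.mono hIcc))
      intro x hx
      rw [interior_Icc] at hx
      have hxI : x ∈ Icc x0 b := Ioo_subset_Icc_self hx
      have hxm : Icc (-1 : ℝ) 1 ∈ nhds x := Icc_mem_nhds (hIoo x hxI).1 (hIoo x hxI).2
      have hu2 : HasDerivAt u' (u'' x) x := (hd2 x (hIcc hxI)).hasDerivAt hxm
      have hd : HasDerivAt (fun x => G' x - u' x) (a ^ 2 * G x - u'' x) x :=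
        (hG'd x).sub hu2
      rw [show deriv (G' - u') x = _ from hd.deriv]
      exact hW2neg x hxI
    -- hence w' < 0 on (x0, b]
    have hw'neg : ∀ x ∈ Ioo x0 b, G' x - u' x < 0 := by
      intro x hx
      have := hanti' (left_mem_Icc.2 hx0b.le) (Ioo_subset_Icc_self hx) hx.1
      simp only at this
      linarith [hw'0]
    -- so w is strictly decreasing on [x0, b]
    have hanti : StrictAntiOn (fun x => G x - u x) (Icc x0 b) := by
      apply strictAntiOn_of_deriv_neg (convex_Icc _ _)
        (hGc.continuousOn.sub (hu_cont.mono hIcc))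
      intro x hx
      rw [interior_Icc] at hx
      have hxI : x ∈ Icc x0 b := Ioo_subset_Icc_self hx
      have hxm : Icc (-1 : ℝ) 1 ∈ nhds x := Icc_mem_nhds (hIoo x hxI).1 (hIoo x hxI).2
      have hu1' : HasDerivAt u (u' x) x := (hd1 x (hIcc hxI)).hasDerivAt hxm
      have hd : HasDerivAt (fun x => G x - u x) (G' x - u' x) x := (hGd x).sub hu1'
      rw [show deriv (G - u) x = _ from hd.deriv]
      exact hw'neg x hx
    have hbI : b ∈ Icc x0 b := right_mem_Icc.2 hx0b.le
    have hlt := hanti (left_mem_Icc.2 hx0b.le) hbI hx0b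
    have hge := hmin (hIcc hbI)
    simp only [Set.mem_setOf_eq] at hlt hge
    linarith
  intro y hy
  have hmy := main y hy
  have e1 : -M * (1 + y) / ε = -a * y + -a := by rw [ha]; field_simp; ring
  have e2 : -M * (1 - y) / ε = a * y + -a := by rw [ha]; field_simp; ring
  rw [e1, e2]
  simp only [hGdef] at hmy
  linarith
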